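/- Let (Ω, μ) be a measure space with 0 < μ(Ω) < ∞, let N ⊆ ℝ^ν be a nonempty closed set, and let u : Ω → ℝ^ν be integrable with u(ω) ∈ N for μ-almost every ω. Then the distance from the average value of u to N satisfies dist( (1/μ(Ω)) ∫_Ω u dμ , N ) ≤ (1/μ(Ω)²) ∫_Ω ∫_Ω ‖u(z) − u(w)‖ dμ(z) dμ(w). -/

import Mathlib

open MeasureTheory Metric

/-- If `(Ω, μ)` is a measure space with `0 < μ(Ω) < ∞`, `N ⊆ ℝ^ν` is nonempty and
closed, and `u : Ω → ℝ^ν` is integrable with `u(ω) ∈ N` a.e., then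
`dist( (1/μ(Ω)) ∫ u dμ , N ) ≤ (1/μ(Ω)²) ∫∫ ‖u(z) − u(w)‖ dμ(z) dμ(w)`. -/
theorem stmt_7 {Ω : Type*} [MeasurableSpace Ω] (μ : Measure Ω)
    (hμ0 : 0 < μ Set.univ) (hμtop : μ Set.univ ≠ ⊤)
    (ν : ℕ) (N : Set (EuclideanSpace ℝ (Fin ν))) (hN : N.Nonempty) (hNc : IsClosed N)
    (u : Ω → EuclideanSpace ℝ (Fin ν)) (hu : Integrable u μ)
    (huN : ∀ᵐ ω ∂μ, u ω ∈ N) :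
    Metric.infDist (((μ Set.univ).toReal)⁻¹ • ∫ ω, u ω ∂μ) N
      ≤ (((μ Set.univ).toReal) ^ 2)⁻¹ * ∫ z, (∫ w, ‖u z - u w‖ ∂μ) ∂μ := by
  have hfin : IsFiniteMeasure μ := ⟨lt_top_iff_ne_top.mpr hμtop⟩
  set m := (μ Set.univ).toReal with hm
  have hm0 : 0 < m := ENNReal.toReal_pos hμ0.ne' hμtop
  set a := m⁻¹ • ∫ ω, u ω ∂μ with ha
  -- integrability on the product
  have h2 : Integrable (fun p : Ω × Ω => u p.2) (μ.prod μ) := by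
    have := (integrable_const (1 : ℝ) (μ := μ)).smul_prod hu
    simpa using this
  have h1 : Integrable (fun p : Ω × Ω => u p.1) (μ.prod μ) := by
    simpa [Function.comp_def] using h2.swap
  have hg : Integrable (fun p : Ω × Ω => ‖u p.1 - u p.2‖) (μ.prod μ) := (h1.sub h2).norm
  have hf : Integrable (fun z => ∫ w, ‖u z - u w‖ ∂μ) μ := hg.integral_prod_left
  -- pointwise bound : ‖a - u z‖ ≤ m⁻¹ * ∫ w, ‖u z - u w‖
  have key : ∀ z, ‖a - u z‖ ≤ m⁻¹ * ∫ w, ‖u z - u w‖ ∂μ := by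
    intro z
    have hsub : a - u z = m⁻¹ • ∫ w, (u w - u z) ∂μ := by
      rw [integral_sub hu (integrable_const _), integral_const, ha]
      rw [smul_sub, smul_smul, show μ.real Set.univ = m from rfl, inv_mul_cancel₀ hm0.ne', one_smul]
    calc ‖a - u z‖ = m⁻¹ * ‖∫ w, (u w - u z) ∂μ‖ := by
          rw [hsub, norm_smul, Real.norm_eq_abs, abs_of_pos (inv_pos.mpr hm0)]
      _ ≤ m⁻¹ * ∫ w, ‖u w - u z‖ ∂μ := by
          exact mul_le_mul_of_nonneg_left (norm_integral_le_integral_norm (μ := μ) (fun w => u w - u z))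
            (inv_pos.mpr hm0).le
      _ = m⁻¹ * ∫ w, ‖u z - u w‖ ∂μ := by
          congr 1
          refine integral_congr_ae (Filter.Eventually.of_forall fun w => ?_)
          simp only []; rw [norm_sub_rev]
  -- average the infDist bound
  have havg : m * infDist a N ≤ ∫ z, m⁻¹ * ∫ w, ‖u z - u w‖ ∂μ ∂μ := by
    have hmono : ∫ z, infDist a N ∂μ ≤ ∫ z, m⁻¹ * ∫ w, ‖u z - u w‖ ∂μ ∂μ := by
      refine integral_mono_ae (integrable_const _) (hf.const_mul _) ?_
      filter_upwards [huN] with z hz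
      exact le_trans (le_trans (infDist_le_dist_of_mem hz) (by rw [dist_eq_norm])) (key z)
    rwa [integral_const, smul_eq_mul, show μ.real Set.univ = m from rfl] at hmono
  rw [MeasureTheory.integral_const_mul] at havg
  have h2' : infDist a N ≤ m⁻¹ * (m⁻¹ * ∫ z, ∫ w, ‖u z - u w‖ ∂μ ∂μ) := by
    rw [← mul_le_mul_iff_of_pos_left hm0, ← mul_assoc, mul_inv_cancel₀ hm0.ne', one_mul]
    exact havg
  calc infDist a N ≤ m⁻¹ * (m⁻¹ * ∫ z, ∫ w, ‖u z - u w‖ ∂μ ∂μ) := h2'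
    _ = (m ^ 2)⁻¹ * ∫ z, ∫ w, ‖u z - u w‖ ∂μ ∂μ := by ring
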